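/- Assume the feasible family F is nonempty. Then every inclusion-maximal set S ∈ F has cardinality |S| = min(k, Σ_{c=1}^C min(u_c, |V_c|)). -/
import Mathlib


open Finset

/-- The feasible family `F`: subsets of `V` of size at most `k` whose intersection with
each color class `Vc c` has cardinality between `ℓ c` and `u c`. -/
def Feasible {α : Type*} [DecidableEq α] {C : ℕ} (V : Finset α) (Vc : Fin C → Finset α)
    (ℓ u : Fin C → ℕ) (k : ℕ) (S : Finset α) : Prop :=
  S ⊆ V ∧ S.card ≤ k ∧ ∀ c, ℓ c ≤ (S ∩ Vc c).card ∧ (S ∩ Vc c).card ≤ u c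

/-- A set is extendable if it is contained in some feasible set. -/
def Extendable {α : Type*} [DecidableEq α] {C : ℕ} (V : Finset α) (Vc : Fin C → Finset α)
    (ℓ u : Fin C → ℕ) (k : ℕ) (S : Finset α) : Prop :=
  ∃ S', Feasible V Vc ℓ u k S' ∧ S ⊆ S'

lemma card_eq_sum_inter {α : Type*} [DecidableEq α] {C : ℕ} {V : Finset α} {Vc : Fin C → Finset α}
    (hV : V = Finset.univ.biUnion Vc)
    (hdisj : ∀ c d : Fin C, c ≠ d → Disjoint (Vc c) (Vc d))
    {S : Finset α} (hSV : S ⊆ V) :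
    S.card = ∑ c, (S ∩ Vc c).card := by
  have hS : S = Finset.univ.biUnion (fun c => S ∩ Vc c) := by
    ext x
    simp only [Finset.mem_biUnion, Finset.mem_univ, true_and, Finset.mem_inter]
    constructor
    · intro hx
      have := hSV hx
      rw [hV] at this
      simp only [Finset.mem_biUnion, Finset.mem_univ, true_and] at this
      obtain ⟨c, hc⟩ := this
      exact ⟨c, hx, hc⟩
    · rintro ⟨c, hx, _⟩; exact hx
  conv_lhs => rw [hS]
  rw [Finset.card_biUnion]
  intro c _ d _ hcd
  exact Finset.disjoint_of_subset_left Finset.inter_subset_right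
    (Finset.disjoint_of_subset_right Finset.inter_subset_right (hdisj c d hcd))

/-- Every inclusion-maximal feasible set has cardinality
`min k (∑ c, min (u c) |Vc c|)`. -/
theorem maximal_feasible_card {α : Type*} [DecidableEq α] (C : ℕ) (V : Finset α)
    (Vc : Fin C → Finset α)
    (hV : V = Finset.univ.biUnion Vc)
    (hdisj : ∀ c d : Fin C, c ≠ d → Disjoint (Vc c) (Vc d))
    (ℓ u : Fin C → ℕ) (hlu : ∀ c, ℓ c ≤ u c) (k : ℕ)
    (hne : ∃ S, Feasible V Vc ℓ u k S)
    (S : Finset α)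
    (hS : Feasible V Vc ℓ u k S)
    (hmax : ∀ S', Feasible V Vc ℓ u k S' → S ⊆ S' → S' = S) :
    S.card = min k (∑ c, min (u c) (Vc c).card) := by
  obtain ⟨hSV, hSk, hSc⟩ := hS
  have hcard : S.card = ∑ c, (S ∩ Vc c).card := card_eq_sum_inter hV hdisj hSV
  have hub : S.card ≤ ∑ c, min (u c) (Vc c).card := by
    rw [hcard]
    apply Finset.sum_le_sum
    intro c _
    exact le_min (hSc c).2 (Finset.card_le_card Finset.inter_subset_right)
  rcases le_or_gt (min k (∑ c, min (u c) (Vc c).card)) S.card with h | h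
  · exact le_antisymm (le_min hSk hub) h
  -- otherwise, S.card < k and some color is not saturated; extend S
  exfalso
  have hk : S.card < k := lt_of_lt_of_le h (min_le_left _ _)
  have hM : S.card < ∑ c, min (u c) (Vc c).card := lt_of_lt_of_le h (min_le_right _ _)
  rw [hcard] at hM
  obtain ⟨c, -, hc⟩ : ∃ c ∈ Finset.univ, (S ∩ Vc c).card < min (u c) (Vc c).card := by
    by_contra hcon
    push_neg at hcon
    exact absurd (Finset.sum_le_sum (fun c hc => hcon c hc)) (not_le.mpr hM)
  have hcu : (S ∩ Vc c).card < u c := lt_of_lt_of_le hc (min_le_left _ _)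
  have hcV : (S ∩ Vc c).card < (Vc c).card := lt_of_lt_of_le hc (min_le_right _ _)
  obtain ⟨x, hxV, hxS⟩ : ∃ x ∈ Vc c, x ∉ S := by
    by_contra hcon
    push_neg at hcon
    have : Vc c ⊆ S ∩ Vc c := fun y hy => Finset.mem_inter.mpr ⟨hcon y hy, hy⟩
    exact absurd (Finset.card_le_card this) (not_le.mpr hcV)
  have hxnotin : ∀ d, d ≠ c → x ∉ Vc d := fun d hd hxd =>
    (Finset.disjoint_left.mp (hdisj c d (Ne.symm hd)) hxV) hxd
  have hfeas : Feasible V Vc ℓ u k (insert x S) := by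
    refine ⟨Finset.insert_subset ?_ hSV, ?_, ?_⟩
    · rw [hV]; exact Finset.mem_biUnion.mpr ⟨c, Finset.mem_univ c, hxV⟩
    · rw [Finset.card_insert_of_notMem hxS]; omega
    · intro d
      rcases eq_or_ne d c with rfl | hdc
      · rw [Finset.insert_inter_of_mem hxV,
          Finset.card_insert_of_notMem (fun hmem => hxS (Finset.mem_inter.mp hmem).1)]
        exact ⟨le_trans (hSc d).1 (Nat.le_succ _), hcu⟩
      · rw [Finset.insert_inter_of_notMem (hxnotin d hdc)]
        exact hSc d
  have := hmax _ hfeas (Finset.subset_insert x S)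
  exact hxS (this ▸ Finset.mem_insert_self x S)
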